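/- Let d ≥ 2, F ∈ (2^{-d}, 1], k ∈ (1/2, 1). Define η_global(n) = d(1 - C_dp(F,d,n,k)) with C_dp(F,d,n,k) = (1-k^{n-1}F)(4^{nd}k^{n-1}F - 2^{nd}-2)/(((2^{nd}-2)k^{n-1}F+1)(2^{nd}-1)), and η_local(n) = 1 - C_loc(n) with C_loc(n) = (1 - k^{(n-1)/d})((2^n - 2)k^{1/d} + 4^n k^{n/d}) / ((2^n - 1)(k^{1/d} + (2^n-2)k^{n/d})). Then η_global(n) ~ dF·k^{n-1} and η_local(n) ~ (k^{1/d})^{n-1} as n → ∞, so η_global(n)/η_local(n) → 0; in particular there exists N such that η_global(n) < η_local(n) for all n ≥ N. -/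

import Mathlib

open Filter

private lemma tendsto_c_r (c r : ℝ) (h0 : 0 ≤ r) (h1 : r < 1) :
    Tendsto (fun m : ℕ => c * r ^ m) atTop (nhds 0) := by
  simpa using (tendsto_pow_atTop_nhds_zero_of_lt_one h0 h1).const_mul c

private lemma glob_alg (D M A : ℝ) (hD : D ≠ 0) (hA : A ≠ 0) (hM0 : M ≠ 0) (hM1 : M - 1 ≠ 0)
    (hden : (M-2)*A+1 ≠ 0) :
    (D * (1 - (1-A)*(M^2*A - M - 2)/(((M-2)*A+1)*(M-1)))) / (D*A)
    = (1 - 4*(1/(M*A)) + 2*(1/(M*A^2)) + (1/(M*A))^2)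
      / ((1 - 2*(1/M) + 1/(M*A))*(1 - 1/M)) := by
  have h1 : (1 - 2*(1/M) + 1/(M*A)) = ((M-2)*A+1)/(M*A) := by field_simp
  have h2 : (1 - 1/M) = (M-1)/M := by field_simp
  rw [h1, h2]
  generalize hE : (M-2)*A+1 = E at *
  field_simp
  rw [← hE]
  ring

private lemma loc_alg (L b c : ℝ) (hc : c ≠ 0) (hL : L ≠ 0) (hL1 : L - 1 ≠ 0)
    (hden : b + (L-2)*(c*b) ≠ 0) (hden2 : (L-2)*c + 1 ≠ 0) :
    (1 - (1-c)*((L-2)*b + L^2*(c*b))/((L-1)*(b + (L-2)*(c*b)))) / c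
    = (1 - 2*(1/(L*c)) + 1/(L^2*c^2)) / ((1 - 1/L) * (1 - 2*(1/L) + 1/(L*c))) := by
  have h1 : (1 - 2*(1/L) + 1/(L*c)) = ((L-2)*c+1)/(L*c) := by field_simp
  have h2 : (1 - 1/L) = (L-1)/L := by field_simp
  rw [h1, h2]
  generalize hE : (L-2)*c+1 = E at *
  generalize hG : b + (L-2)*(c*b) = G at *
  field_simp
  rw [← hE, ← hG]
  ring

private lemma div_trick (x y p q c : ℝ) (hp : p ≠ 0) (hq : q ≠ 0) (hc : p = c * q) :
    x / y = (x/p) * (q/y) * c := by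
  rcases eq_or_ne y 0 with h|h
  · simp [h]
  · subst hc
    have hc0 : c ≠ 0 := fun h0 => hp (by simp [h0])
    field_simp

set_option maxHeartbeats 1000000 in
theorem stmt_18 (d : ℕ) (hd : 2 ≤ d) (F k : ℝ)
    (hF : F ∈ Set.Ioc (1 / (2:ℝ)^d) 1) (hk : k ∈ Set.Ioo (1/2 : ℝ) 1) :
    let ηg : ℕ → ℝ := fun n => d * (1 -
      (1 - k^(n-1) * F) * ((4:ℝ)^(n*d) * (k^(n-1) * F) - 2^(n*d) - 2) /
        ((((2:ℝ)^(n*d) - 2) * (k^(n-1) * F) + 1) * ((2:ℝ)^(n*d) - 1)))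
    let ηl : ℕ → ℝ := fun n => 1 -
      (1 - k ^ (((n:ℝ) - 1) / d)) * (((2:ℝ)^n - 2) * k ^ ((1:ℝ)/d) + (4:ℝ)^n * k ^ ((n:ℝ)/d)) /
        (((2:ℝ)^n - 1) * (k ^ ((1:ℝ)/d) + ((2:ℝ)^n - 2) * k ^ ((n:ℝ)/d)))
    Filter.Tendsto (fun n : ℕ => ηg n / (d * F * k^(n-1))) Filter.atTop (nhds 1) ∧
    Filter.Tendsto (fun n : ℕ => ηl n / (k ^ ((1:ℝ)/d))^(n-1)) Filter.atTop (nhds 1) ∧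
    Filter.Tendsto (fun n : ℕ => ηg n / ηl n) Filter.atTop (nhds 0) ∧
    ∃ N : ℕ, ∀ n ≥ N, ηg n < ηl n := by
  intro ηg ηl
  obtain ⟨hF1, hF2⟩ := hF
  obtain ⟨hk1, hk2⟩ := hk
  have hk0 : (0:ℝ) < k := by linarith
  have hF0 : (0:ℝ) < F := lt_trans (by positivity) hF1
  have hd0 : (0:ℝ) < (d:ℝ) := by positivity
  have hdne : (d:ℝ) ≠ 0 := by positivity
  have hE4 : (4:ℝ) ≤ (2:ℝ)^d := by
    calc (4:ℝ) = 2^2 := by norm_num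
    _ ≤ 2^d := by apply pow_le_pow_right₀ one_le_two hd
  set b := k ^ ((1:ℝ)/(d:ℝ)) with hbdef
  have hb0 : 0 < b := Real.rpow_pos_of_pos hk0 _
  have hb1 : b < 1 := Real.rpow_lt_one hk0.le hk2 (by positivity)
  have hkb : k < b := by
    have h1d : (1:ℝ)/(d:ℝ) < 1 := by
      rw [div_lt_one hd0]
      exact_mod_cast lt_of_lt_of_le one_lt_two hd
    have := Real.rpow_lt_rpow_of_exponent_gt hk0 hk2 h1d
    rw [Real.rpow_one] at this
    exact this
  have hbhalf : (1:ℝ)/2 < b := lt_trans hk1 hkb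
  -- Part 1
  have h1 : Tendsto (fun n : ℕ => ηg n / (d * F * k^(n-1))) atTop (nhds 1) := by
    apply (Filter.tendsto_add_atTop_iff_nat 1).mp
    have hx : Tendsto (fun m : ℕ => 1/((2:ℝ)^((m+1)*d) * (k^m*F))) atTop (nhds 0) := by
      refine (tendsto_c_r (1/((2:ℝ)^d*F)) (1/((2:ℝ)^d*k)) (by positivity) ?_).congr fun m => ?_
      · rw [div_lt_one (by positivity)]; nlinarith
      · rw [show (m+1)*d = d + d*m from by ring, pow_add, pow_mul]
        have h2d0 : ((2:ℝ)^d) ≠ 0 := by positivity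
        simp only [one_div_pow, mul_pow]
        field_simp
    have hy : Tendsto (fun m : ℕ => 1/((2:ℝ)^((m+1)*d) * (k^m*F)^2)) atTop (nhds 0) := by
      refine (tendsto_c_r (1/((2:ℝ)^d*F^2)) (1/((2:ℝ)^d*k^2)) (by positivity) ?_).congr fun m => ?_
      · rw [div_lt_one (by positivity)]; nlinarith
      · rw [show (m+1)*d = d + d*m from by ring, pow_add, pow_mul]
        have h2d0 : ((2:ℝ)^d) ≠ 0 := by positivity
        simp only [one_div_pow, mul_pow, ← pow_mul]
        field_simp
        ring
    have hw : Tendsto (fun m : ℕ => 1/((2:ℝ)^((m+1)*d))) atTop (nhds 0) := by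
      refine (tendsto_c_r (1/((2:ℝ)^d)) (1/((2:ℝ)^d)) (by positivity) ?_).congr fun m => ?_
      · rw [div_lt_one (by positivity)]; nlinarith
      · rw [show (m+1)*d = d + d*m from by ring, pow_add, pow_mul]
        have h2d0 : ((2:ℝ)^d) ≠ 0 := by positivity
        simp only [one_div_pow, mul_pow]
        field_simp
    have hG : Tendsto (fun m : ℕ =>
        (1 - 4*(1/((2:ℝ)^((m+1)*d) * (k^m*F))) + 2*(1/((2:ℝ)^((m+1)*d)*(k^m*F)^2))
          + (1/((2:ℝ)^((m+1)*d)*(k^m*F)))^2) /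
        ((1 - 2*(1/((2:ℝ)^((m+1)*d))) + 1/((2:ℝ)^((m+1)*d)*(k^m*F)))
          * (1 - 1/((2:ℝ)^((m+1)*d))))) atTop
        (nhds ((1 - 4*0 + 2*0 + 0^2)/((1-2*0+0)*(1-0)))) := by
      exact Tendsto.div
        (((tendsto_const_nhds.sub (hx.const_mul 4)).add (hy.const_mul 2)).add (hx.pow 2))
        (((tendsto_const_nhds.sub (hw.const_mul 2)).add hx).mul (tendsto_const_nhds.sub hw))
        (by norm_num)
    rw [show ((1:ℝ) - 4*0 + 2*0 + 0^2)/((1-2*0+0)*(1-0)) = 1 by norm_num] at hG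
    refine hG.congr fun m => ?_
    simp only [ηg, Nat.add_sub_cancel]
    have hM4 : (4:ℝ) ≤ (2:ℝ)^((m+1)*d) := by
      calc (4:ℝ) ≤ 2^d := hE4
      _ ≤ 2^((m+1)*d) := by
          apply pow_le_pow_right₀ one_le_two
          exact Nat.le_mul_of_pos_left d m.succ_pos
    have hA0 : (0:ℝ) < k^m*F := by positivity
    have e4 : (4:ℝ)^((m+1)*d) = ((2:ℝ)^((m+1)*d))^2 := by
      rw [show (4:ℝ) = 2^2 by norm_num, ← pow_mul, mul_comm 2 ((m+1)*d), pow_mul]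
    rw [e4, show ((d:ℝ)*F*k^m) = (d:ℝ)*(k^m*F) from by ring]
    exact (glob_alg (d:ℝ) ((2:ℝ)^((m+1)*d)) (k^m*F) hdne (ne_of_gt hA0)
      (by positivity) (by nlinarith) (by nlinarith)).symm
  -- Part 2
  have h2 : Tendsto (fun n : ℕ => ηl n / (k ^ ((1:ℝ)/d))^(n-1)) atTop (nhds 1) := by
    apply (Filter.tendsto_add_atTop_iff_nat 1).mp
    have hq : Tendsto (fun m : ℕ => 1/((2:ℝ)^(m+1) * b^m)) atTop (nhds 0) := by
      refine (tendsto_c_r (1/2) (1/(2*b)) (by positivity) ?_).congr fun m => ?_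
      · rw [div_lt_one (by positivity)]; nlinarith
      · rw [pow_succ]
        have hbne : b ≠ 0 := ne_of_gt hb0
        simp only [one_div_pow, mul_pow]
        field_simp
    have hs : Tendsto (fun m : ℕ => 1/(((2:ℝ)^(m+1))^2 * (b^m)^2)) atTop (nhds 0) := by
      refine (tendsto_c_r (1/4) (1/(4*b^2)) (by positivity) ?_).congr fun m => ?_
      · rw [div_lt_one (by positivity)]; nlinarith
      · have h4 : ((2:ℝ)^(m+1))^2 = 4^m*4 := by
          rw [← pow_mul, show (m+1)*2 = 2*(m+1) from mul_comm _ _, pow_mul,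
            show ((2:ℝ)^2) = 4 by norm_num, pow_succ]
        rw [h4]
        have hbne : b ≠ 0 := ne_of_gt hb0
        simp only [one_div_pow, mul_pow, ← pow_mul]
        field_simp
        ring
    have hp : Tendsto (fun m : ℕ => 1/((2:ℝ)^(m+1))) atTop (nhds 0) := by
      refine (tendsto_c_r (1/2) (1/2) (by positivity) ?_).congr fun m => ?_
      · norm_num
      · rw [pow_succ]
        simp only [one_div_pow, mul_pow]
        field_simp
    have hG : Tendsto (fun m : ℕ =>
        (1 - 2*(1/((2:ℝ)^(m+1) * b^m)) + 1/(((2:ℝ)^(m+1))^2*(b^m)^2)) /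
        ((1 - 1/((2:ℝ)^(m+1))) * (1 - 2*(1/((2:ℝ)^(m+1))) + 1/((2:ℝ)^(m+1) * b^m))))
        atTop (nhds ((1 - 2*0 + 0)/((1-0)*(1-2*0+0)))) := by
      exact Tendsto.div
        ((tendsto_const_nhds.sub (hq.const_mul 2)).add hs)
        ((tendsto_const_nhds.sub hp).mul ((tendsto_const_nhds.sub (hp.const_mul 2)).add hq))
        (by norm_num)
    rw [show ((1:ℝ) - 2*0 + 0)/((1-0)*(1-2*0+0)) = 1 by norm_num] at hG
    refine hG.congr fun m => ?_
    simp only [ηl, Nat.add_sub_cancel]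
    have hL2 : (2:ℝ) ≤ (2:ℝ)^(m+1) := by
      calc (2:ℝ) = 2^1 := by norm_num
      _ ≤ 2^(m+1) := by apply pow_le_pow_right₀ one_le_two (Nat.le_add_left 1 m)
    have ec1 : k ^ (((↑(m+1):ℝ) - 1)/(d:ℝ)) = b^m := by
      rw [show ((↑(m+1):ℝ) - 1)/(d:ℝ) = ((1:ℝ)/(d:ℝ))*(m:ℝ) from by push_cast; ring]
      rw [Real.rpow_mul hk0.le, Real.rpow_natCast]
    have ec2 : k ^ ((↑(m+1):ℝ)/(d:ℝ)) = b^(m+1) := by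
      rw [show ((↑(m+1):ℝ))/(d:ℝ) = ((1:ℝ)/(d:ℝ))*((m+1:ℕ):ℝ) from by push_cast; ring]
      rw [Real.rpow_mul hk0.le, Real.rpow_natCast]
    have e4 : (4:ℝ)^(m+1) = ((2:ℝ)^(m+1))^2 := by
      rw [show (4:ℝ) = 2^2 by norm_num, ← pow_mul, mul_comm 2 (m+1), pow_mul]
    rw [ec1, ec2, e4, pow_succ]
    have hbm0 : (0:ℝ) < b^m := by positivity
    exact (loc_alg ((2:ℝ)^(m+1)) b (b^m) (ne_of_gt hbm0) (by positivity) (by nlinarith)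
      (by nlinarith [mul_nonneg (mul_nonneg (by linarith : (0:ℝ) ≤ (2:ℝ)^(m+1) - 2) hbm0.le) hb0.le])
      (by nlinarith)).symm
  -- Part 3
  have h3 : Tendsto (fun n : ℕ => ηg n / ηl n) atTop (nhds 0) := by
    apply (Filter.tendsto_add_atTop_iff_nat 1).mp
    have h1' := (Filter.tendsto_add_atTop_iff_nat 1).mpr h1
    have h2' := (Filter.tendsto_add_atTop_iff_nat 1).mpr h2
    have hinv : Tendsto (fun m : ℕ => (b:ℝ)^(m+1-1) / ηl (m+1)) atTop (nhds 1) := by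
      have := h2'.inv₀ one_ne_zero
      rw [inv_one] at this
      refine this.congr fun m => ?_
      rw [inv_div]
    have haux3 : Tendsto (fun m : ℕ => (d:ℝ)*F*(k/b)^m) atTop (nhds 0) := by
      simpa using (tendsto_c_r ((d:ℝ)*F) (k/b) (by positivity)
        ((div_lt_one hb0).mpr hkb))
    have key := (h1'.mul hinv).mul haux3
    rw [show ((1:ℝ)*1*0 : ℝ) = 0 by norm_num] at key
    refine key.congr fun m => ?_
    simp only [Nat.add_sub_cancel]
    refine (div_trick (ηg (m+1)) (ηl (m+1)) ((d:ℝ)*F*k^m) (b^m) ((d:ℝ)*F*(k/b)^m)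
      (by positivity) (by positivity) ?_).symm
    rw [div_pow]
    field_simp
  -- Part 4
  refine ⟨h1, h2, h3, ?_⟩
  have hev1 : ∀ᶠ n in atTop, ηg n / ηl n < 1 := h3.eventually_lt_const (by norm_num)
  have hev2 : ∀ᶠ n in atTop, 0 < ηl n := by
    have h := h2.eventually_const_lt (show (1:ℝ)/2 < 1 by norm_num)
    filter_upwards [h] with n hn
    have hbp : (0:ℝ) < (k ^ ((1:ℝ)/(d:ℝ)))^(n-1) := by positivity
    have := (lt_div_iff₀ hbp).mp hn
    exact lt_trans (by positivity) this
  obtain ⟨N, hN⟩ := Filter.eventually_atTop.mp (hev1.and hev2)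
  exact ⟨N, fun n hn => (div_lt_one (hN n hn).2).mp (hN n hn).1⟩
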